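/- If a nonnegative matrix A has some cycle σ with μ_σ(A) > 1, then ρ(A) > 1. -/

import Mathlib

/-- Spectral radius of a real matrix: the supremum of the absolute values of the
(complex) roots of its characteristic polynomial. -/
noncomputable def specRad {n : Type*} [Fintype n] [DecidableEq n]
    (A : Matrix n n ℝ) : ℝ :=
  sSup {r : ℝ | ∃ μ : ℂ, ((A.map (algebraMap ℝ ℂ)).charpoly).IsRoot μ ∧ r = ‖μ‖}

open Matrix Polynomial Filter
open scoped ENNReal NNReal

attribute [local instance] Matrix.linftyOpNormedRing Matrix.linftyOpNormedAlgebra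

namespace SpecRadAux

variable {N : Type*} [Fintype N] [DecidableEq N]

lemma entry_nonneg_pow {A : Matrix N N ℝ} (hA : ∀ i j, 0 ≤ A i j) (k : ℕ) :
    ∀ i j, 0 ≤ (A ^ k) i j := by
  induction k with
  | zero =>
    intro i j
    by_cases h : i = j <;> simp [pow_zero, Matrix.one_apply, h]
  | succ k ih =>
    intro i j
    rw [pow_succ, Matrix.mul_apply]
    exact Finset.sum_nonneg fun l _ => mul_nonneg (ih i l) (hA l j)

lemma path_le {A : Matrix N N ℝ} (hA : ∀ i j, 0 ≤ A i j) (g : ℕ → N) (L : ℕ) :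
    ∏ j ∈ Finset.range L, A (g j) (g (j + 1)) ≤ (A ^ L) (g 0) (g L) := by
  induction L with
  | zero => simp [pow_zero, Matrix.one_apply_eq]
  | succ L ih =>
    rw [Finset.prod_range_succ, pow_succ, Matrix.mul_apply]
    calc (∏ j ∈ Finset.range L, A (g j) (g (j + 1))) * A (g L) (g (L + 1))
        ≤ (A ^ L) (g 0) (g L) * A (g L) (g (L + 1)) :=
          mul_le_mul_of_nonneg_right ih (hA _ _)
      _ ≤ ∑ l, (A ^ L) (g 0) l * A l (g (L + 1)) :=
          Finset.single_le_sum (f := fun l => (A ^ L) (g 0) l * A l (g (L + 1)))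
            (fun l _ => mul_nonneg (entry_nonneg_pow hA L _ _) (hA _ _))
            (Finset.mem_univ (g L))

lemma norm_entry_le (M : Matrix N N ℂ) (i j : N) : ‖M i j‖ ≤ ‖M‖ := by
  rw [Matrix.linfty_opNorm_def]
  have h1 : ‖M i j‖₊ ≤ ∑ j' : N, ‖M i j'‖₊ :=
    Finset.single_le_sum (f := fun j' => ‖M i j'‖₊) (fun l _ => zero_le)
      (Finset.mem_univ j)
  have h2 : (∑ j' : N, ‖M i j'‖₊) ≤ (Finset.univ : Finset N).sup
      (fun i : N => ∑ j' : N, ‖M i j'‖₊) :=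
    Finset.le_sup (f := fun i : N => ∑ j' : N, ‖M i j'‖₊) (Finset.mem_univ i)
  exact_mod_cast h1.trans h2

lemma isRoot_of_mem_spectrum {M : Matrix N N ℂ} {μ : ℂ}
    (h : μ ∈ spectrum ℂ M) : M.charpoly.IsRoot μ := by
  rw [spectrum.mem_iff, Matrix.isUnit_iff_isUnit_det, isUnit_iff_ne_zero, not_not] at h
  show Polynomial.eval μ M.charpoly = 0
  rw [Matrix.charpoly, eval_det, Matrix.matPolyEquiv_charmatrix, eval_sub, eval_X,
    eval_C, ← h]
  congr 1

end SpecRadAux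

open SpecRadAux Fin.NatCast in
/-- If a nonnegative matrix `A` has a cycle `f 0 → f 1 → ⋯ → f m → f 0` through distinct
indices whose geometric mean `μ_σ(A) = (Π_j A (f j) (f (j+1)))^{1/(m+1)}` exceeds `1`,
then `ρ(A) > 1`. -/
theorem specRad_gt_one_of_cycle (n m : ℕ) (A : Matrix (Fin n) (Fin n) ℝ)
    (hA : ∀ i j, 0 ≤ A i j) (f : Fin (m + 1) → Fin n) (hf : Function.Injective f)
    (hσ : (∏ j : Fin (m + 1), A (f j) (f (j + 1))) ^ ((1 : ℝ) / (m + 1)) > 1) :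
    specRad A > 1 := by
  classical
  set P : ℝ := ∏ j : Fin (m + 1), A (f j) (f (j + 1)) with hPdef
  have hP0 : 0 ≤ P := Finset.prod_nonneg fun j _ => hA _ _
  set B : Matrix (Fin n) (Fin n) ℂ := A.map (algebraMap ℝ ℂ) with hBdef
  -- Step 1 : the cycle gives a big diagonal entry of `A ^ (m + 1)`
  have hcyc : P ≤ (A ^ (m + 1)) (f 0) (f 0) := by
    have h := path_le hA (fun j => f (j : Fin (m + 1))) (m + 1)
    have hg0 : ((0 : ℕ) : Fin (m + 1)) = 0 := by simp
    have hgm : (((m + 1 : ℕ)) : Fin (m + 1)) = 0 := by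
      simp [Fin.natCast_self]
    rw [hg0, hgm] at h
    refine le_trans (le_of_eq ?_) h
    rw [hPdef, ← Fin.prod_univ_eq_prod_range
      (fun j : ℕ => A (f (j : Fin (m + 1))) (f ((j + 1 : ℕ) : Fin (m + 1)))) (m + 1)]
    apply Finset.prod_congr rfl
    intro i _
    congr 1 <;> push_cast <;> simp [Fin.cast_val_eq_self]
  -- Step 2 : powers of the cycle bound
  have hdiag : ∀ k : ℕ, P ^ k ≤ (A ^ ((m + 1) * k)) (f 0) (f 0) := by
    intro k
    have h := path_le (entry_nonneg_pow hA (m + 1)) (fun _ => f 0) k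
    simp only [Finset.prod_const, Finset.card_range] at h
    calc P ^ k ≤ ((A ^ (m + 1)) (f 0) (f 0)) ^ k := pow_le_pow_left₀ hP0 hcyc k
      _ ≤ ((A ^ (m + 1)) ^ k) (f 0) (f 0) := h
      _ = (A ^ ((m + 1) * k)) (f 0) (f 0) := by rw [← pow_mul]
  -- Step 3 : norm lower bound for powers of B
  have hBpow : ∀ L : ℕ, B ^ L = (A ^ L).map (algebraMap ℝ ℂ) := by
    intro L
    rw [hBdef, ← RingHom.mapMatrix_apply, ← RingHom.mapMatrix_apply, ← map_pow]
  have hnorm : ∀ k : ℕ, P ^ k ≤ ‖B ^ ((m + 1) * k)‖ := by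
    intro k
    have h1 : ‖(B ^ ((m + 1) * k)) (f 0) (f 0)‖ ≤ ‖B ^ ((m + 1) * k)‖ :=
      norm_entry_le _ _ _
    refine le_trans ?_ h1
    rw [hBpow, Matrix.map_apply, Complex.coe_algebraMap, Complex.norm_real,
      Real.norm_eq_abs, abs_of_nonneg (entry_nonneg_pow hA _ _ _)]
    exact hdiag k
  -- Step 4 : Gelfand's formula
  haveI : CompleteSpace (Matrix (Fin n) (Fin n) ℂ) := FiniteDimensional.complete ℂ _
  have hG := spectrum.pow_norm_pow_one_div_tendsto_nhds_spectralRadius B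
  have hsub : Tendsto (fun k : ℕ => (m + 1) * (k + 1)) atTop atTop := by
    apply tendsto_atTop_mono (fun k => ?_) tendsto_id
    calc (id k : ℕ) ≤ k + 1 := Nat.le_succ k
      _ ≤ (m + 1) * (k + 1) := Nat.le_mul_of_pos_left _ (Nat.succ_pos m)
  have hG' := hG.comp hsub
  set c : ℝ := P ^ ((1 : ℝ) / (m + 1)) with hcdef
  have hc1 : 1 < c := hσ
  have key : ENNReal.ofReal c ≤ spectralRadius ℂ B := by
    refine ge_of_tendsto hG' (Filter.Eventually.of_forall fun k => ?_)
    show ENNReal.ofReal c ≤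
      ENNReal.ofReal (‖B ^ ((m + 1) * (k + 1))‖ ^ (1 / ((m + 1) * (k + 1) : ℕ) : ℝ))
    apply ENNReal.ofReal_le_ofReal
    have hNpos : (0 : ℝ) < ((m + 1) * (k + 1) : ℕ) := by positivity
    have hceq : c = (P ^ (k + 1)) ^ (1 / ((m + 1) * (k + 1) : ℕ) : ℝ) := by
      rw [← Real.rpow_natCast P (k + 1), ← Real.rpow_mul hP0, hcdef]
      congr 1
      field_simp
      push_cast; ring
    rw [hceq]
    exact Real.rpow_le_rpow (pow_nonneg hP0 _) (hnorm (k + 1)) (by positivity)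
  -- Step 5 : extract an eigenvalue of modulus > 1
  have hone : (1 : ℝ≥0∞) < spectralRadius ℂ B := by
    refine lt_of_lt_of_le ?_ key
    rw [← ENNReal.ofReal_one]
    exact ENNReal.ofReal_lt_ofReal_iff (by linarith) |>.mpr hc1
  simp only [spectralRadius, lt_iSup_iff] at hone
  obtain ⟨μ, hμmem, hμ1⟩ := hone
  have hμabs : (1 : ℝ) < ‖μ‖ := by
    have : (1 : ℝ≥0) < ‖μ‖₊ := by exact_mod_cast hμ1
    exact_mod_cast this
  have hroot : B.charpoly.IsRoot μ := isRoot_of_mem_spectrum hμmem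
  -- Step 6 : conclude via sSup
  have hne : B.charpoly ≠ 0 := (Matrix.charpoly_monic B).ne_zero
  have hfin : {r : ℝ | ∃ μ : ℂ, B.charpoly.IsRoot μ ∧ r = ‖μ‖}.Finite := by
    apply Set.Finite.subset ((Polynomial.finite_setOf_isRoot hne).image (‖·‖))
    rintro r ⟨ν, hν, rfl⟩
    exact ⟨ν, hν, rfl⟩
  have hmem : ‖μ‖ ∈
      {r : ℝ | ∃ μ : ℂ, B.charpoly.IsRoot μ ∧ r = ‖μ‖} := ⟨μ, hroot, rfl⟩
  have := le_csSup hfin.bddAbove hmem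
  calc (1 : ℝ) < ‖μ‖ := hμabs
    _ ≤ specRad A := this
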